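/- Suppose p and q are even and positive, ε+η ≡ n (mod 2), and u ≡ ε+1 (mod 2). Then the number of reduced solutions for the data (n,k,u,v,p,q,ε,η) equals the binomial coefficient C(k−1, (p−2)/2) = C(k−1, q/2). -/

import Mathlib

open Finset

namespace Stmt8Aux

/-- Count of elements above `f i` in the image of a strictly decreasing function. -/
lemma count_above {c : ℕ} {f : Fin c → ℤ} (hf : StrictAnti f) (i : Fin c) :
    ((Finset.univ.image f).filter (fun z => f i < z)).card = i.1 := by
  have h1 : (Finset.univ.image f).filter (fun z => f i < z)
      = (Finset.univ.filter (fun j => j < i)).image f := by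
    ext z
    simp only [mem_filter, mem_image, mem_univ, true_and]
    constructor
    · rintro ⟨⟨j, rfl⟩, hlt⟩; exact ⟨j, hf.lt_iff_gt.mp hlt, rfl⟩
    · rintro ⟨j, hj, rfl⟩; exact ⟨⟨j, rfl⟩, hf hj⟩
  have h2 : (Finset.univ.filter (fun j => j < i)) = Finset.Iio i := by
    ext j; simp
  rw [h1, Finset.card_image_of_injective _ hf.injective, h2, Fin.card_Iio]

/-- Uniqueness of the decreasing enumeration. -/
lemma enum_unique {c : ℕ} {f g : Fin c → ℤ} (hf : StrictAnti f) (hg : StrictAnti g)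
    (h : Finset.univ.image f = Finset.univ.image g) : f = g := by
  have hrev : StrictAnti (Fin.rev : Fin c → Fin c) := fun i j hij => Fin.rev_lt_rev.mpr hij
  have hcard : (Finset.univ.image f).card = c := by
    rw [Finset.card_image_of_injective _ hf.injective, card_univ, Fintype.card_fin]
  have h1 := Finset.orderEmbOfFin_unique hcard (f := f ∘ Fin.rev)
    (fun i => Finset.mem_image_of_mem _ (mem_univ _)) (hf.comp hrev)
  have h2 := Finset.orderEmbOfFin_unique hcard (f := g ∘ Fin.rev)
    (fun i => by rw [h]; exact Finset.mem_image_of_mem _ (mem_univ _)) (hg.comp hrev)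
  funext i
  have := congrFun (h1.trans h2.symm) i.rev
  simpa [Function.comp, Fin.rev_rev] using this

/-- Gap estimate for strictly decreasing integer sequences. -/
lemma gap {c : ℕ} {f : Fin c → ℤ} (hf : StrictAnti f) {i j : Fin c} (hij : i ≤ j) :
    f j + ((j.1 : ℤ) - i.1) ≤ f i := by
  obtain ⟨d, hd⟩ : ∃ d, j.1 = i.1 + d := ⟨j.1 - i.1, by omega⟩
  induction d generalizing j with
  | zero => have : j = i := Fin.ext (by omega); subst this; simp
  | succ d ih =>
    have hj' : i.1 + d < c := by omega
    have h1 := ih (j := ⟨i.1 + d, hj'⟩) (by rw [Fin.le_def]; show i.1 ≤ i.1 + d; omega) rfl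
    have h2 : f j < f ⟨i.1 + d, hj'⟩ := hf (by rw [Fin.lt_def]; show i.1 + d < j.1; omega)
    simp only at h1 h2 ⊢
    omega

def pr (N : ℤ) (j : ℕ) : Finset ℤ := {N + 2*((j:ℤ)+1), N + 2*((j:ℤ)+1) + 1}

def pU (N : ℤ) {K : ℕ} (T : Finset (Fin K)) : Finset ℤ := T.biUnion fun i => pr N i.1

lemma mem_pr {N : ℤ} {j : ℕ} {w : ℤ} :
    w ∈ pr N j ↔ w = N + 2*((j:ℤ)+1) ∨ w = N + 2*((j:ℤ)+1) + 1 := by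
  simp [pr]

lemma mem_pU {N : ℤ} {K : ℕ} {T : Finset (Fin K)} {w : ℤ} :
    w ∈ pU N T ↔ ∃ i ∈ T, w = N + 2*((i.1:ℤ)+1) ∨ w = N + 2*((i.1:ℤ)+1) + 1 := by
  simp [pU, mem_pr]

lemma pr_disj (N : ℤ) {i j : ℕ} (hij : i ≠ j) : Disjoint (pr N i) (pr N j) := by
  simp only [Finset.disjoint_left, mem_pr]
  rintro a (rfl | rfl) h <;> rcases h with h | h <;> omega

lemma card_pr (N : ℤ) (j : ℕ) : (pr N j).card = 2 := by
  rw [pr, card_insert_of_notMem (by simp), card_singleton]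

lemma card_pU (N : ℤ) {K : ℕ} (T : Finset (Fin K)) : (pU N T).card = 2 * T.card := by
  rw [pU, card_biUnion]
  · rw [Finset.sum_congr rfl (fun i _ => card_pr N i.1), Finset.sum_const, smul_eq_mul, mul_comm]
  · intro i _ j _ hij
    exact pr_disj N (fun h => hij (Fin.ext h))

lemma card_filter_pr (N : ℤ) (j : ℕ) (w : ℤ) :
    ((pr N j).filter (fun z => w < z)).card =
      if w < N + 2*((j:ℤ)+1) then 2 else if w = N + 2*((j:ℤ)+1) then 1 else 0 := by
  rw [pr, filter_insert, filter_singleton]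
  split_ifs <;> simp_all <;> omega

lemma count_pU_notmem {N : ℤ} {K : ℕ} {T : Finset (Fin K)} {w : ℤ} (hw : w ∉ pU N T) :
    ((pU N T).filter (fun z => w < z)).card % 2 = 0 := by
  rw [pU, filter_biUnion, card_biUnion]
  · have hdvd : 2 ∣ ∑ i ∈ T, ((pr N i.1).filter (fun z => w < z)).card := by
      refine Finset.dvd_sum fun i hi => ?_
      rw [card_filter_pr]
      split_ifs with h1 h2
      · exact ⟨1, rfl⟩
      · exact absurd (mem_pU.mpr ⟨i, hi, Or.inl h2⟩) hw
      · exact ⟨0, rfl⟩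
    omega
  · intro i _ j _ hij
    exact Finset.disjoint_filter_filter (pr_disj N (fun h => hij (Fin.ext h)))

lemma count_pU_mem {N : ℤ} {K : ℕ} {T : Finset (Fin K)} {w : ℤ} (hw : w ∈ pU N T) :
    (((pU N T).filter (fun z => w < z)).card : ℤ) % 2 = (w - N - 1) % 2 := by
  obtain ⟨i₀, hi₀, hcase⟩ := mem_pU.mp hw
  rw [pU, filter_biUnion, card_biUnion
    (fun i _ j _ hij => Finset.disjoint_filter_filter (pr_disj N (fun h => hij (Fin.ext h))))]
  rw [← Finset.add_sum_erase _ _ hi₀]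
  have hdvd : 2 ∣ ∑ i ∈ T.erase i₀, ((pr N i.1).filter (fun z => w < z)).card := by
    refine Finset.dvd_sum fun i hi => ?_
    have hne : i.1 ≠ i₀.1 := fun h => (Finset.mem_erase.mp hi).1 (Fin.ext h)
    rw [card_filter_pr]
    split_ifs with h1 h2
    · exact ⟨1, rfl⟩
    · rcases hcase with h | h <;> omega
    · exact ⟨0, rfl⟩
  obtain ⟨r, hr⟩ := hdvd
  rw [card_filter_pr, hr]
  rcases hcase with h | h
  · rw [if_neg (by omega), if_pos (by omega)]
    push_cast
    omega
  · rw [if_neg (by omega), if_neg (by omega)]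
    push_cast
    omega

lemma count_Icc (a b w : ℤ) (hw : a - 1 ≤ w) :
    ((Finset.Icc a b).filter (fun z => w < z)).card = (b - w).toNat := by
  have h : (Finset.Icc a b).filter (fun z => w < z) = Finset.Icc (w+1) b := by
    ext z; simp only [mem_filter, mem_Icc]; omega
  rw [h, Int.card_Icc]
  omega

end Stmt8Aux

/-- A *reduced solution* for the data `(n,k,u,v,p,q,ε,η)` (with `n = 2k+u+v`,
`p + q = 2k`): strictly decreasing positive integers `x_1 > … > x_q` and
`y_1 > … > y_p` whose underlying sets are disjoint with union `{u+v+1, …, n}`,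
together with weakly decreasing nonnegative integers `b_1 ≥ … ≥ b_q ≥ 0`,
`a_1 ≥ … ≥ a_p ≥ 0` such that `x_i = (u+q+1−i) + η + 2b_i` and
`y_m = (v+p−m) + ε + 2a_m` (written here with 0-based indices). -/
structure RedSol (n u v p q ε η : ℕ) where
  x : Fin q → ℤ
  y : Fin p → ℤ
  b : Fin q → ℤ
  a : Fin p → ℤ
  x_anti : StrictAnti x
  y_anti : StrictAnti y
  x_pos : ∀ i, 0 < x i
  y_pos : ∀ m, 0 < y m
  disj : Disjoint (Finset.univ.image x) (Finset.univ.image y)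
  uni : Finset.univ.image x ∪ Finset.univ.image y =
    Finset.Icc ((u : ℤ) + v + 1) (n : ℤ)
  b_anti : Antitone b
  a_anti : Antitone a
  b_nonneg : ∀ i, 0 ≤ b i
  a_nonneg : ∀ m, 0 ≤ a m
  hx : ∀ i : Fin q, x i = (u : ℤ) + q - i.1 + η + 2 * b i
  hy : ∀ m : Fin p, y m = (v : ℤ) + p - 1 - m.1 + ε + 2 * a m

namespace Stmt8Aux

lemma imy_eq {n u v p q ε η : ℕ} (R : RedSol n u v p q ε η) :
    Finset.univ.image R.y = Finset.Icc ((u : ℤ) + v + 1) (n : ℤ) \ Finset.univ.image R.x := by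
  ext z
  simp only [mem_sdiff, ← R.uni, mem_union]
  constructor
  · intro hz
    exact ⟨Or.inr hz, fun hzx => (Finset.disjoint_left.mp R.disj hzx) hz⟩
  · rintro ⟨hor, hnx⟩
    exact hor.resolve_left hnx

lemma redsol_ext {n u v p q ε η : ℕ} (R R' : RedSol n u v p q ε η)
    (h : Finset.univ.image R.x = Finset.univ.image R'.x) : R = R' := by
  have hx' : R.x = R'.x := enum_unique R.x_anti R'.x_anti h
  have hy' : R.y = R'.y := by
    refine enum_unique R.y_anti R'.y_anti ?_
    rw [imy_eq, imy_eq, h]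
  have hb' : R.b = R'.b := by
    funext i
    have h1 := R.hx i
    have h2 := R'.hx i
    rw [← hx'] at h2
    omega
  have ha' : R.a = R'.a := by
    funext m
    have h1 := R.hy m
    have h2 := R'.hy m
    rw [← hy'] at h2
    omega
  cases R; cases R'
  simp only at hx' hy' hb' ha'
  subst hx' hy' hb' ha'
  rfl

variable (k : ℕ)

def TofR (k : ℕ) {n u v p q ε η : ℕ} (R : RedSol n u v p q ε η) : Finset (Fin (k-1)) :=
  Finset.univ.filter fun i => ((u:ℤ) + v + 2*((i.1:ℤ)+1)) ∈ Finset.univ.image R.x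

lemma fwd (n k u v p q ε η : ℕ) (hk : 1 ≤ k) (hn : 2 * k + u + v = n)
    (hpq : p + q = 2 * k) (hε : ε ≤ 1) (hη : η ≤ 1)
    (hpe : p % 2 = 0) (hqe : q % 2 = 0)
    (hmod : (ε + η) % 2 = n % 2) (humod : u % 2 = (ε + 1) % 2)
    (R : RedSol n u v p q ε η) :
    Finset.univ.image R.x = pU ((u:ℤ)+v) (TofR k R) := by
  have hv2 : (v + η) % 2 = 1 := by omega
  have hu2 : (u + ε) % 2 = 1 := by omega
  set N : ℤ := (u:ℤ) + v with hN
  set X := Finset.univ.image R.x with hX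
  set Y := Finset.univ.image R.y with hYdef
  have hnN : (n:ℤ) = N + 2*k := by rw [hN]; push_cast; omega
  have hUni : X ∪ Y = Finset.Icc (N+1) (N + 2*k) := by
    rw [hX, hYdef, R.uni, hnN]
  have hIccX : ∀ w ∈ X, N+1 ≤ w ∧ w ≤ N+2*k := by
    intro w hw
    have : w ∈ X ∪ Y := Finset.mem_union_left _ hw
    rw [hUni] at this
    exact Finset.mem_Icc.mp this
  have cardX : X.card = q := by
    rw [hX, Finset.card_image_of_injective _ R.x_anti.injective, card_univ, Fintype.card_fin]
  have cntX : ∀ (i : Fin q) (w : ℤ), R.x i = w →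
      (X.filter (fun z => w < z)).card = i.1 := by
    rintro i w rfl
    exact count_above R.x_anti i
  have cntY : ∀ (m : Fin p) (w : ℤ), R.y m = w →
      (Y.filter (fun z => w < z)).card = m.1 := by
    rintro m w rfl
    exact count_above R.y_anti m
  have insX : ∀ (i : Fin q) (w : ℤ), R.x i = w + 1 →
      (X.filter (fun z => w < z)).card = i.1 + 1 := by
    intro i w hw
    have he : X.filter (fun z => w < z) = insert (R.x i) (X.filter (fun z => R.x i < z)) := by
      ext z
      simp only [mem_filter, mem_insert]
      constructor
      · rintro ⟨hz, hlt⟩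
        rcases eq_or_lt_of_le (by omega : R.x i ≤ z) with h | h
        · exact Or.inl h.symm
        · exact Or.inr ⟨hz, h⟩
      · rintro (rfl | ⟨hz, hlt⟩)
        · exact ⟨Finset.mem_image_of_mem _ (mem_univ _), by omega⟩
        · exact ⟨hz, by omega⟩
    rw [he, Finset.card_insert_of_notMem (by simp), cntX i _ rfl]
  have insY : ∀ (m : Fin p) (w : ℤ), R.y m = w + 1 →
      (Y.filter (fun z => w < z)).card = m.1 + 1 := by
    intro m w hw
    have he : Y.filter (fun z => w < z) = insert (R.y m) (Y.filter (fun z => R.y m < z)) := by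
      ext z
      simp only [mem_filter, mem_insert]
      constructor
      · rintro ⟨hz, hlt⟩
        rcases eq_or_lt_of_le (by omega : R.y m ≤ z) with h | h
        · exact Or.inl h.symm
        · exact Or.inr ⟨hz, h⟩
      · rintro (rfl | ⟨hz, hlt⟩)
        · exact ⟨Finset.mem_image_of_mem _ (mem_univ _), by omega⟩
        · exact ⟨hz, by omega⟩
    rw [he, Finset.card_insert_of_notMem (by simp), cntY m _ rfl]
  have split : ∀ w : ℤ, N ≤ w →
      (X.filter (fun z => w < z)).card + (Y.filter (fun z => w < z)).card
        = (N + 2*k - w).toNat := by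
    intro w hw
    rw [← count_Icc (N+1) (N+2*k) w (by omega), ← hUni, Finset.filter_union,
      Finset.card_union_of_disjoint]
    exact Finset.disjoint_filter_filter R.disj
  have memX : ∀ w ∈ X, ∃ i, R.x i = w := by
    intro w hw
    rw [hX] at hw
    obtain ⟨i, -, hi⟩ := Finset.mem_image.mp hw
    exact ⟨i, hi⟩
  have memY : ∀ w ∈ Y, ∃ m, R.y m = w := by
    intro w hw
    rw [hYdef] at hw
    obtain ⟨m, -, hm⟩ := Finset.mem_image.mp hw
    exact ⟨m, hm⟩
  have claim_top : (N + 2*k) ∉ X := by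
    intro hmem
    obtain ⟨i, hi⟩ := memX _ hmem
    have h0 : (X.filter (fun z => (N + 2*k : ℤ) < z)).card = 0 := by
      rw [Finset.card_eq_zero, Finset.filter_eq_empty_iff]
      intro z hz
      have := hIccX z hz
      omega
    have h1 := cntX i _ hi
    have h2 := R.hx i
    omega
  have claim_bot : (N + 1) ∉ X := by
    intro hmem
    obtain ⟨i, hi⟩ := memX _ hmem
    have he : X.filter (fun z => (N+1:ℤ) < z) = X.erase (N+1) := by
      ext z
      simp only [mem_filter, Finset.mem_erase]
      constructor
      · rintro ⟨hz, hlt⟩; exact ⟨by omega, hz⟩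
      · rintro ⟨hne, hz⟩
        have := hIccX z hz
        exact ⟨hz, by omega⟩
    have h1 := cntX i _ hi
    rw [he, Finset.card_erase_of_mem hmem, cardX] at h1
    have h2 := R.hx i
    have h3 : i.1 < q := i.2
    omega
  have claim_pair : ∀ j : ℕ, 1 ≤ j → j + 1 ≤ k →
      ((N + 2*j ∈ X) ↔ (N + 2*j + 1 ∈ X)) := by
    intro j hj1 hjk
    constructor
    · intro hL
      by_contra hR
      have hRY : (N + 2*(j:ℤ) + 1) ∈ Y := by
        have hmem : (N + 2*(j:ℤ) + 1) ∈ X ∪ Y := by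
          rw [hUni, Finset.mem_Icc]
          omega
        exact (Finset.mem_union.mp hmem).resolve_left hR
      obtain ⟨i, hi⟩ := memX _ hL
      obtain ⟨m, hm⟩ := memY _ hRY
      have c1 := cntX i _ hi
      have c2 := insY m (N + 2*(j:ℤ)) (by omega)
      have c3 := split (N + 2*(j:ℤ)) (by omega)
      have e1 := R.hx i
      have e2 := R.hy m
      omega
    · intro hR
      by_contra hL
      have hLY : (N + 2*(j:ℤ)) ∈ Y := by
        have hmem : (N + 2*(j:ℤ)) ∈ X ∪ Y := by
          rw [hUni, Finset.mem_Icc]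
          omega
        exact (Finset.mem_union.mp hmem).resolve_left hL
      obtain ⟨i, hi⟩ := memX _ hR
      obtain ⟨m, hm⟩ := memY _ hLY
      have c1 := insX i (N + 2*(j:ℤ)) (by omega)
      have c2 := cntY m _ hm
      have c3 := split (N + 2*(j:ℤ)) (by omega)
      have e1 := R.hx i
      have e2 := R.hy m
      omega
  refine Finset.ext fun w => ?_
  constructor
  · intro hw
    have hb := hIccX w hw
    have hmemT : ∀ jf : Fin (k-1), ((u:ℤ) + v + 2*((jf.1:ℤ)+1)) ∈ X → jf ∈ TofR k R := by
      intro jf h3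
      rw [TofR, Finset.mem_filter]
      exact ⟨mem_univ _, h3⟩
    rcases Int.even_or_odd' (w - N) with ⟨j, hj | hj⟩
    · -- w = N + 2j
      have hj1 : 1 ≤ j := by omega
      have hjk : j + 1 ≤ (k:ℤ) := by
        have hne : w ≠ N + 2*k := fun h => claim_top (h ▸ hw)
        omega
      refine mem_pU.mpr ⟨⟨j.toNat - 1, by omega⟩, hmemT _ ?_, ?_⟩
      · have he : ((u:ℤ) + v + 2*((((j.toNat - 1 : ℕ)):ℤ)+1)) = w := by
          rw [← hN]; push_cast; omega
        rw [he]; exact hw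
      · left
        show w = N + 2*(((j.toNat - 1 : ℕ):ℤ)+1)
        push_cast
        omega
    · -- w = N + 2j + 1
      have hj1 : 1 ≤ j := by
        have hne : w ≠ N + 1 := fun h => claim_bot (h ▸ hw)
        omega
      have hjk : j + 1 ≤ (k:ℤ) := by omega
      have hwX : N + 2*(j.toNat:ℤ) ∈ X := by
        refine (claim_pair j.toNat (by omega) (by omega)).mpr ?_
        have : N + 2*(j.toNat:ℤ) + 1 = w := by omega
        rw [this]; exact hw
      refine mem_pU.mpr ⟨⟨j.toNat - 1, by omega⟩, hmemT _ ?_, ?_⟩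
      · have he : ((u:ℤ) + v + 2*((((j.toNat - 1 : ℕ)):ℤ)+1)) = N + 2*(j.toNat:ℤ) := by
          rw [← hN]; push_cast; omega
        rw [he]; exact hwX
      · right
        show w = N + 2*(((j.toNat - 1 : ℕ):ℤ)+1) + 1
        push_cast
        omega
  · intro hw
    obtain ⟨i, hiT, hcase⟩ := mem_pU.mp hw
    rw [TofR, Finset.mem_filter] at hiT
    have hA : N + 2*((i.1:ℤ)+1) ∈ X := hiT.2
    have hik : i.1 + 1 + 1 ≤ k := by have := i.2; omega
    rcases hcase with h | h
    · rw [show w = N + 2*(((i.1+1 : ℕ)):ℤ) from by push_cast; omega]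
      exact_mod_cast hA
    · rw [show w = N + 2*(((i.1+1 : ℕ)):ℤ) + 1 from by push_cast; omega]
      refine (claim_pair (i.1+1) (by omega) (by omega)).mp ?_
      have : N + 2*(((i.1+1:ℕ)):ℤ) = N + 2*((i.1:ℤ)+1) := by push_cast; ring
      rw [this]
      exact hA

lemma build (n k u v p q ε η : ℕ) (hk : 1 ≤ k) (hn : 2 * k + u + v = n)
    (hpq : p + q = 2 * k) (hε : ε ≤ 1) (hη : η ≤ 1)
    (hpe : p % 2 = 0) (hqe : q % 2 = 0) (hppos : 0 < p) (hqpos : 0 < q)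
    (hmod : (ε + η) % 2 = n % 2) (humod : u % 2 = (ε + 1) % 2)
    (T : Finset (Fin (k-1))) (hT : 2 * T.card = q) :
    ∃ R : RedSol n u v p q ε η, Finset.univ.image R.x = pU ((u:ℤ)+v) T := by
  have hv2 : (v + η) % 2 = 1 := by omega
  have hu2 : (u + ε) % 2 = 1 := by omega
  set N : ℤ := (u:ℤ) + v with hN
  have hnN : (n:ℤ) = N + 2*k := by rw [hN]; push_cast; omega
  set X := pU N T with hX
  have cardX : X.card = q := by rw [hX, card_pU, hT]
  set Y := Finset.Icc (N+1) (N+2*k) \ X with hY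
  have hXbd : ∀ w ∈ X, N + 2 ≤ w ∧ w ≤ N + 2*k - 1 := by
    intro w hw
    obtain ⟨i, -, hcase⟩ := mem_pU.mp hw
    have := i.2
    rcases hcase with h | h <;>
      constructor <;> [skip; skip; skip; skip] <;> omega
  have hXsub : X ⊆ Finset.Icc (N+1) (N+2*k) := by
    intro w hw
    have := hXbd w hw
    rw [Finset.mem_Icc]
    omega
  have cardY : Y.card = p := by
    rw [hY, Finset.card_sdiff_of_subset hXsub, Int.card_Icc, cardX]
    omega
  set x : Fin q → ℤ := fun i => X.orderEmbOfFin cardX i.rev with hxdef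
  set y : Fin p → ℤ := fun m => Y.orderEmbOfFin cardY m.rev with hydef
  have x_anti : StrictAnti x := fun i j h =>
    (X.orderEmbOfFin cardX).strictMono (Fin.rev_lt_rev.mpr h)
  have y_anti : StrictAnti y := fun i j h =>
    (Y.orderEmbOfFin cardY).strictMono (Fin.rev_lt_rev.mpr h)
  have x_mem : ∀ i, x i ∈ X := fun i => Finset.orderEmbOfFin_mem X cardX i.rev
  have y_mem : ∀ m, y m ∈ Y := fun m => Finset.orderEmbOfFin_mem Y cardY m.rev
  have imx : Finset.univ.image x = X := by
    refine Finset.eq_of_subset_of_card_le ?_ ?_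
    · intro w hw
      obtain ⟨i, -, rfl⟩ := Finset.mem_image.mp hw
      exact x_mem i
    · rw [cardX, Finset.card_image_of_injective _ x_anti.injective, card_univ, Fintype.card_fin]
  have imy : Finset.univ.image y = Y := by
    refine Finset.eq_of_subset_of_card_le ?_ ?_
    · intro w hw
      obtain ⟨m, -, rfl⟩ := Finset.mem_image.mp hw
      exact y_mem m
    · rw [cardY, Finset.card_image_of_injective _ y_anti.injective, card_univ, Fintype.card_fin]
  have cntx : ∀ i : Fin q, (X.filter (fun z => x i < z)).card = i.1 := by
    intro i
    rw [← imx]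
    exact count_above x_anti i
  have cnty : ∀ m : Fin p, (Y.filter (fun z => y m < z)).card = m.1 := by
    intro m
    rw [← imy]
    exact count_above y_anti m
  have px : ∀ i : Fin q, ((i.1:ℤ)) % 2 = (x i - N - 1) % 2 := by
    intro i
    have h1 := count_pU_mem (x_mem i)
    rw [← hX] at h1
    rw [cntx i] at h1
    exact h1
  have py : ∀ m : Fin p, ((m.1:ℤ)) % 2 = (y m - N) % 2 := by
    intro m
    have hmY := y_mem m
    rw [hY, Finset.mem_sdiff] at hmY
    have h1 := count_pU_notmem (T := T) (N := N) (w := y m) (by rw [← hX]; exact hmY.2)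
    rw [← hX] at h1
    have h2 := cnty m
    have h3 := count_Icc (N+1) (N+2*k) (y m)
      (by have := Finset.mem_Icc.mp hmY.1; omega)
    have h4 : (Y.filter (fun z => y m < z)).card + (X.filter (fun z => y m < z)).card
        = ((Finset.Icc (N+1) (N+2*k)).filter (fun z => y m < z)).card := by
      have hfs : Y.filter (fun z => y m < z)
          = (Finset.Icc (N+1) (N+2*k)).filter (fun z => y m < z)
            \ X.filter (fun z => y m < z) := by
        ext z
        simp only [hY, Finset.mem_sdiff, mem_filter]
        tauto
      rw [hfs]
      exact Finset.card_sdiff_add_card_eq_card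
        (Finset.filter_subset_filter _ hXsub)
    have hbd := Finset.mem_Icc.mp hmY.1
    omega
  have hb : ∀ i : Fin q, 2 ∣ (x i - ((u:ℤ) + q - i.1 + η)) := by
    intro i
    have := px i
    omega
  have ha : ∀ m : Fin p, 2 ∣ (y m - ((v:ℤ) + p - 1 - m.1 + ε)) := by
    intro m
    have := py m
    omega
  have hxeq : ∀ i : Fin q, x i = (u:ℤ) + q - i.1 + η
      + 2 * ((x i - ((u:ℤ) + q - i.1 + η)) / 2) := by
    intro i
    have := Int.mul_ediv_cancel' (hb i)
    omega
  have hyeq : ∀ m : Fin p, y m = (v:ℤ) + p - 1 - m.1 + ε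
      + 2 * ((y m - ((v:ℤ) + p - 1 - m.1 + ε)) / 2) := by
    intro m
    have := Int.mul_ediv_cancel' (ha m)
    omega
  have hq1 : q - 1 < q := by omega
  have hp1 : p - 1 < p := by omega
  refine ⟨⟨x, y,
    fun i => (x i - ((u:ℤ) + q - i.1 + η)) / 2,
    fun m => (y m - ((v:ℤ) + p - 1 - m.1 + ε)) / 2,
    x_anti, y_anti, ?_, ?_, ?_, ?_, ?_, ?_, ?_, ?_, hxeq, hyeq⟩, imx⟩
  · -- x_pos
    intro i
    have := hXbd _ (x_mem i)
    omega
  · -- y_pos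
    intro m
    have hmY := y_mem m
    rw [hY, Finset.mem_sdiff, Finset.mem_Icc] at hmY
    omega
  · -- disj
    rw [imx, imy, hY]
    exact Finset.disjoint_sdiff
  · -- uni
    rw [imx, imy, hY, Finset.union_sdiff_of_subset hXsub, hnN]
  · -- b_anti
    intro i j hij
    beta_reduce
    have h1 := hxeq i
    have h2 := hxeq j
    have h3 := gap x_anti hij
    omega
  · -- a_anti
    intro i j hij
    beta_reduce
    have h1 := hyeq i
    have h2 := hyeq j
    have h3 := gap y_anti hij
    omega
  · -- b_nonneg
    intro i
    beta_reduce
    have hlast : x ⟨q-1, hq1⟩ ≥ N + 2 := (hXbd _ (x_mem ⟨q-1, hq1⟩)).1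
    have h1 := hxeq ⟨q-1, hq1⟩
    have h2 := hxeq i
    have h3 := gap x_anti (show i ≤ ⟨q-1, hq1⟩ by rw [Fin.le_def]; show i.1 ≤ q-1; omega)
    have hiq := i.2
    simp only at h1 h3
    omega
  · -- a_nonneg
    intro m
    beta_reduce
    have hmY := y_mem (⟨p-1, hp1⟩ : Fin p)
    rw [hY, Finset.mem_sdiff, Finset.mem_Icc] at hmY
    have h1 := hyeq ⟨p-1, hp1⟩
    have h2 := hyeq m
    have h3 := gap y_anti (show m ≤ ⟨p-1, hp1⟩ by rw [Fin.le_def]; show m.1 ≤ p-1; omega)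
    have hmp := m.2
    simp only at h1 h3
    omega

end Stmt8Aux

/-- Case 1 Ib of the main theorem for Sp(2n,ℝ): `p, q` even and positive, `ε+η ≡ n (mod 2)`,
`u ≡ ε+1 (mod 2)`; the number of reduced solutions is `C(k−1, (p−2)/2) = C(k−1, q/2)`. -/
theorem stmt8 (n k u v p q ε η : ℕ) (hk : 1 ≤ k) (hn : 2 * k + u + v = n)
    (hpq : p + q = 2 * k) (hε : ε ≤ 1) (hη : η ≤ 1)
    (hpe : p % 2 = 0) (hqe : q % 2 = 0) (hppos : 0 < p) (hqpos : 0 < q)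
    (hmod : (ε + η) % 2 = n % 2) (humod : u % 2 = (ε + 1) % 2) :
    Nat.card (RedSol n u v p q ε η) = Nat.choose (k - 1) ((p - 2) / 2) ∧
    Nat.choose (k - 1) ((p - 2) / 2) = Nat.choose (k - 1) (q / 2) := by
  classical
  have hsym : Nat.choose (k - 1) ((p - 2) / 2) = Nat.choose (k - 1) (q / 2) := by
    have h1 : (p - 2) / 2 = (k - 1) - q / 2 := by omega
    rw [h1, Nat.choose_symm (by omega)]
  refine ⟨?_, hsym⟩
  rw [hsym]
  have hcardim : ∀ R : RedSol n u v p q ε η, (Finset.univ.image R.x).card = q := by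
    intro R
    rw [Finset.card_image_of_injective _ R.x_anti.injective, Finset.card_univ, Fintype.card_fin]
  set f : RedSol n u v p q ε η → {T : Finset (Fin (k-1)) // T.card = q / 2} := fun R =>
    ⟨Stmt8Aux.TofR k R, by
      have him := Stmt8Aux.fwd n k u v p q ε η hk hn hpq hε hη hpe hqe hmod humod R
      have hc := hcardim R
      rw [him, Stmt8Aux.card_pU] at hc
      omega⟩ with hf
  have hbij : Function.Bijective f := by
    constructor
    · intro R R' hRR
      have h1 := Stmt8Aux.fwd n k u v p q ε η hk hn hpq hε hη hpe hqe hmod humod R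
      have h2 := Stmt8Aux.fwd n k u v p q ε η hk hn hpq hε hη hpe hqe hmod humod R'
      apply Stmt8Aux.redsol_ext
      rw [h1, h2]
      have : Stmt8Aux.TofR k R = Stmt8Aux.TofR k R' := congrArg Subtype.val hRR
      rw [this]
    · rintro ⟨T, hT⟩
      obtain ⟨R, hR⟩ := Stmt8Aux.build n k u v p q ε η hk hn hpq hε hη hpe hqe hppos hqpos
        hmod humod T (by omega)
      refine ⟨R, ?_⟩
      apply Subtype.ext
      show Stmt8Aux.TofR k R = T
      ext i
      simp only [Stmt8Aux.TofR, Finset.mem_filter, Finset.mem_univ, true_and, hR]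
      rw [Stmt8Aux.mem_pU]
      constructor
      · rintro ⟨i', hi', h | h⟩
        · have : i = i' := Fin.ext (by omega)
          rwa [this]
        · omega
      · intro hi
        exact ⟨i, hi, Or.inl rfl⟩
  rw [Nat.card_eq_of_bijective f hbij, Nat.card_eq_fintype_card, Fintype.card_finset_len,
    Fintype.card_fin]
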